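/- arXiv:1409.4249 — 7 statements merged into one kernel-verified Lean document; each statement's English description precedes it below -/
import Mathlib

section
/- Let E be a Banach space and (T_h)_{h∈ℝ^d} a family of continuous linear operators on E. Let (M_p)_{p∈ℕ} be a sequence of positive real numbers with M_0 = 1 and lim_{p→∞} M_p^{1/p} = ∞, with associated function M. If for every g ∈ E there exist constants C_g > 0 and τ_g > 0 such that ‖T_h g‖_E ≤ C_g e^{M(τ_g |h|)} for all h ∈ ℝ^d, then there exist C > 0 and τ > 0 such that the operator norm satisfies ‖T_h‖ ≤ C e^{M(τ|h|)} for all h ∈ ℝ^d. -/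
open Real Filter

/-- The associated function `M(ρ) = sup_{p∈ℕ} log₊(ρ^p / M_p)` of a sequence `(M_p)`. -/
noncomputable def assocFn (Mp : ℕ → ℝ) (ρ : ℝ) : ℝ :=
  ⨆ p : ℕ, max (Real.log (ρ ^ p / Mp p)) 0

lemma assocFn_bdd (Mp : ℕ → ℝ) (hpos : ∀ p, 0 < Mp p)
    (hlim : Tendsto (fun p : ℕ => Mp p ^ (p : ℝ)⁻¹) atTop atTop)
    {ρ : ℝ} (hρ : 0 ≤ ρ) :
    BddAbove (Set.range fun p : ℕ => max (Real.log (ρ ^ p / Mp p)) 0) := by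
  obtain ⟨N, hN⟩ := (hlim.eventually_ge_atTop (ρ + 1)).exists_forall_of_atTop
  refine ⟨∑ p ∈ Finset.range (N + 1), max (Real.log (ρ ^ p / Mp p)) 0, ?_⟩
  rintro x ⟨q, rfl⟩
  have hsumnn : (0:ℝ) ≤ ∑ p ∈ Finset.range (N + 1), max (Real.log (ρ ^ p / Mp p)) 0 :=
    Finset.sum_nonneg fun p _ => le_max_right _ _
  rcases lt_or_ge q (N + 1) with hq | hq
  · exact Finset.single_le_sum (f := fun p => max (Real.log (ρ ^ p / Mp p)) 0)
      (fun p _ => le_max_right _ _) (Finset.mem_range.mpr hq)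
  · have hqN : N ≤ q := by omega
    have hq1 : q ≠ 0 := by omega
    have h1 : ρ + 1 ≤ Mp q ^ (q : ℝ)⁻¹ := hN q hqN
    have h2 : (ρ + 1) ^ q ≤ (Mp q ^ (q : ℝ)⁻¹) ^ q :=
      pow_le_pow_left₀ (by linarith) h1 q
    have h3 : (Mp q ^ (q : ℝ)⁻¹) ^ q = Mp q := by
      rw [← Real.rpow_natCast (Mp q ^ (q : ℝ)⁻¹) q, ← Real.rpow_mul (hpos q).le]
      rw [inv_mul_cancel₀ (by exact_mod_cast hq1), Real.rpow_one]
    have h4 : ρ ^ q ≤ Mp q := by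
      calc ρ ^ q ≤ (ρ + 1) ^ q := pow_le_pow_left₀ hρ (by linarith) q
        _ ≤ Mp q := h3 ▸ h2
    have h5 : Real.log (ρ ^ q / Mp q) ≤ 0 :=
      Real.log_nonpos (div_nonneg (pow_nonneg hρ q) (hpos q).le) ((div_le_one (hpos q)).mpr h4)
    calc max (Real.log (ρ ^ q / Mp q)) 0 = 0 := max_eq_right h5
      _ ≤ _ := hsumnn

lemma assocFn_nonneg (Mp : ℕ → ℝ) (hpos : ∀ p, 0 < Mp p) (hM0 : Mp 0 = 1)
    (hlim : Tendsto (fun p : ℕ => Mp p ^ (p : ℝ)⁻¹) atTop atTop)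
    {ρ : ℝ} (hρ : 0 ≤ ρ) : 0 ≤ assocFn Mp ρ := by
  have h0 : max (Real.log (ρ ^ 0 / Mp 0)) 0 = 0 := by
    simp [hM0]
  calc (0:ℝ) = max (Real.log (ρ ^ 0 / Mp 0)) 0 := h0.symm
    _ ≤ assocFn Mp ρ := le_ciSup (assocFn_bdd Mp hpos hlim hρ) 0

lemma assocFn_mono (Mp : ℕ → ℝ) (hpos : ∀ p, 0 < Mp p)
    (hlim : Tendsto (fun p : ℕ => Mp p ^ (p : ℝ)⁻¹) atTop atTop)
    {a b : ℝ} (ha : 0 ≤ a) (hab : a ≤ b) : assocFn Mp a ≤ assocFn Mp b := by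
  have hb : 0 ≤ b := le_trans ha hab
  refine ciSup_mono (assocFn_bdd Mp hpos hlim hb) fun p => ?_
  rcases le_or_gt (a ^ p / Mp p) 1 with hle | hgt
  · have : Real.log (a ^ p / Mp p) ≤ 0 := Real.log_nonpos (div_nonneg (pow_nonneg ha p) (hpos p).le) hle
    calc max (Real.log (a ^ p / Mp p)) 0 = 0 := max_eq_right this
      _ ≤ _ := le_max_right _ _
  · have h1 : Real.log (a ^ p / Mp p) ≤ Real.log (b ^ p / Mp p) := by
      apply Real.log_le_log (by linarith)
      gcongr <;> first
        | exact (hpos p).le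
        | exact hpos p
        | exact pow_le_pow_left₀ ha hab p
    exact max_le_max h1 le_rfl

theorem stmt_2 (d : ℕ) {E : Type*} [NormedAddCommGroup E] [NormedSpace ℝ E] [CompleteSpace E]
    (Mp : ℕ → ℝ) (hpos : ∀ p, 0 < Mp p) (hM0 : Mp 0 = 1)
    (hlim : Tendsto (fun p : ℕ => Mp p ^ (p : ℝ)⁻¹) atTop atTop)
    (T : EuclideanSpace ℝ (Fin d) → E →L[ℝ] E)
    (hb : ∀ g : E, ∃ C > (0 : ℝ), ∃ τ > (0 : ℝ), ∀ h : EuclideanSpace ℝ (Fin d),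
      ‖T h g‖ ≤ C * Real.exp (assocFn Mp (τ * ‖h‖))) :
    ∃ C > (0 : ℝ), ∃ τ > (0 : ℝ), ∀ h : EuclideanSpace ℝ (Fin d),
      ‖T h‖ ≤ C * Real.exp (assocFn Mp (τ * ‖h‖)) := by
  -- the closed sets
  set A : ℕ → Set E := fun n =>
    {g : E | ∀ h : EuclideanSpace ℝ (Fin d),
      ‖T h g‖ ≤ (n + 1) * Real.exp (assocFn Mp ((n + 1) * ‖h‖))} with hA
  have hclosed : ∀ n, IsClosed (A n) := by
    intro n
    have : A n = ⋂ h : EuclideanSpace ℝ (Fin d),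
        {g : E | ‖T h g‖ ≤ (n + 1) * Real.exp (assocFn Mp ((n + 1) * ‖h‖))} := by
      ext g; simp [hA]
    rw [this]
    exact isClosed_iInter fun h =>
      isClosed_le (continuous_norm.comp (T h).continuous) continuous_const
  have hcover : (⋃ n, A n) = Set.univ := by
    refine Set.eq_univ_of_forall fun g => ?_
    obtain ⟨C, hC, τ, hτ, hg⟩ := hb g
    obtain ⟨n, hn⟩ := exists_nat_ge (max C τ)
    refine Set.mem_iUnion.mpr ⟨n, fun h => ?_⟩
    have hCn : C ≤ (n:ℝ) + 1 := le_trans (le_max_left _ _) (by linarith)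
    have hτn : τ ≤ (n:ℝ) + 1 := le_trans (le_max_right _ _) (by linarith)
    have hmono : assocFn Mp (τ * ‖h‖) ≤ assocFn Mp (((n:ℝ) + 1) * ‖h‖) :=
      assocFn_mono Mp hpos hlim (by positivity)
        (mul_le_mul_of_nonneg_right hτn (norm_nonneg h))
    calc ‖T h g‖ ≤ C * Real.exp (assocFn Mp (τ * ‖h‖)) := hg h
      _ ≤ ((n:ℝ) + 1) * Real.exp (assocFn Mp (((n:ℝ) + 1) * ‖h‖)) :=
        mul_le_mul hCn (Real.exp_le_exp.mpr hmono) (Real.exp_pos _).le (by positivity)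
  obtain ⟨n, x₀, hx₀⟩ := nonempty_interior_of_iUnion_of_closed hclosed hcover
  obtain ⟨r, hr, hball⟩ := Metric.isOpen_iff.mp isOpen_interior x₀ hx₀
  have hsub : Metric.ball x₀ r ⊆ A n := hball.trans interior_subset
  have hx₀A : x₀ ∈ A n := hsub (Metric.mem_ball_self hr)
  refine ⟨4 * ((n:ℝ) + 1) / r, by positivity, (n:ℝ) + 1, by positivity, fun h => ?_⟩
  set K := 2 * ((n:ℝ) + 1) * Real.exp (assocFn Mp (((n:ℝ) + 1) * ‖h‖)) with hK
  have hKnn : 0 ≤ K := by positivity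
  have key : ∀ z ∈ Metric.ball (0:E) r, ‖T h z‖ ≤ K := by
    intro z hz
    have hz' : x₀ + z ∈ Metric.ball x₀ r := by
      simpa [dist_eq_norm] using (by simpa [Metric.mem_ball, dist_eq_norm] using hz :
        ‖z‖ < r)
    have h1 : ‖T h (x₀ + z)‖ ≤ ((n:ℝ) + 1) * Real.exp (assocFn Mp (((n:ℝ) + 1) * ‖h‖)) :=
      hsub hz' h
    have h2 : ‖T h x₀‖ ≤ ((n:ℝ) + 1) * Real.exp (assocFn Mp (((n:ℝ) + 1) * ‖h‖)) := hx₀A h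
    have he : T h z = T h (x₀ + z) - T h x₀ := by rw [map_add]; abel
    rw [he]
    calc ‖T h (x₀ + z) - T h x₀‖ ≤ ‖T h (x₀ + z)‖ + ‖T h x₀‖ := norm_sub_le _ _
      _ ≤ K := by rw [hK]; linarith
  have hbound : ‖T h‖ ≤ 4 * ((n:ℝ) + 1) / r * Real.exp (assocFn Mp (((n:ℝ) + 1) * ‖h‖)) := by
    apply ContinuousLinearMap.opNorm_le_bound _ (by positivity)
    intro g
    by_cases hg : g = 0
    · simp [hg]
    · have hgn : 0 < ‖g‖ := norm_pos_iff.mpr hg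
      set c : ℝ := r / (2 * ‖g‖) with hc
      have hcpos : 0 < c := by positivity
      have hznorm : ‖c • g‖ = r / 2 := by
        rw [norm_smul, Real.norm_eq_abs, abs_of_pos hcpos, hc]
        field_simp
      have hmem : c • g ∈ Metric.ball (0:E) r := by
        rw [Metric.mem_ball, dist_zero_right, hznorm]
        linarith
      have hk := key _ hmem
      rw [map_smul, norm_smul, Real.norm_eq_abs, abs_of_pos hcpos] at hk
      have h1 : ‖T h g‖ ≤ K / c := (le_div_iff₀ hcpos).mpr (by linarith [hk])
      have h2 : K / c = 4 * ((n:ℝ) + 1) / r * Real.exp (assocFn Mp (((n:ℝ) + 1) * ‖h‖)) * ‖g‖ := by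
        rw [hK, hc]
        field_simp
        ring
      linarith [h1, h2.le, h2.ge]
  exact hbound
end

section
/- Let E be a Banach space and (T_h)_{h∈ℝ^d} a family of continuous linear operators on E. Let (M_p)_{p∈ℕ} be a sequence of positive real numbers with M_0 = 1 and lim_{p→∞} M_p^{1/p} = ∞, with associated function M. If for every g ∈ E and every τ > 0 there exists a constant C_{g,τ} > 0 such that ‖T_h g‖_E ≤ C_{g,τ} e^{M(τ|h|)} for all h ∈ ℝ^d, then for every τ > 0 there exists C_τ > 0 such that the operator norm satisfies ‖T_h‖ ≤ C_τ e^{M(τ|h|)} for all h ∈ ℝ^d. -/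
open Real Filter

theorem stmt_3 (d : ℕ) {E : Type*} [NormedAddCommGroup E] [NormedSpace ℝ E] [CompleteSpace E]
    (Mp : ℕ → ℝ) (hpos : ∀ p, 0 < Mp p) (hM0 : Mp 0 = 1)
    (hlim : Tendsto (fun p : ℕ => Mp p ^ (p : ℝ)⁻¹) atTop atTop)
    (T : EuclideanSpace ℝ (Fin d) → E →L[ℝ] E)
    (hb : ∀ g : E, ∀ τ > (0 : ℝ), ∃ C > (0 : ℝ), ∀ h : EuclideanSpace ℝ (Fin d),
      ‖T h g‖ ≤ C * Real.exp (assocFn Mp (τ * ‖h‖))) :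
    ∀ τ > (0 : ℝ), ∃ C > (0 : ℝ), ∀ h : EuclideanSpace ℝ (Fin d),
      ‖T h‖ ≤ C * Real.exp (assocFn Mp (τ * ‖h‖)) := by
  intro τ hτ
  set S : EuclideanSpace ℝ (Fin d) → E →L[ℝ] E :=
    fun h => Real.exp (-(assocFn Mp (τ * ‖h‖))) • T h with hS
  have hpt : ∀ x : E, ∃ C, ∀ h, ‖S h x‖ ≤ C := by
    intro x
    obtain ⟨C, hC, hCle⟩ := hb x τ hτ
    refine ⟨C, fun h => ?_⟩
    have := hCle h
    simp only [hS, ContinuousLinearMap.smul_apply, norm_smul, Real.norm_eq_abs,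
      abs_of_pos (Real.exp_pos _)]
    rw [Real.exp_neg]
    rw [inv_mul_le_iff₀ (Real.exp_pos _)]
    linarith [this]
  obtain ⟨C', hC'⟩ := banach_steinhaus hpt
  refine ⟨max C' 1, lt_of_lt_of_le one_pos (le_max_right _ _), fun h => ?_⟩
  have hTS : T h = Real.exp (assocFn Mp (τ * ‖h‖)) • S h := by
    rw [hS]
    simp [smul_smul, ← Real.exp_add]
  have h1 : ‖T h‖ ≤ ‖Real.exp (assocFn Mp (τ * ‖h‖))‖ * ‖S h‖ := by
    rw [hTS]; exact ContinuousLinearMap.opNorm_smul_le _ _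
  rw [Real.norm_eq_abs, abs_of_pos (Real.exp_pos _)] at h1
  have h2 : ‖S h‖ ≤ max C' 1 := (hC' h).trans (le_max_left _ _)
  calc ‖T h‖ ≤ Real.exp (assocFn Mp (τ * ‖h‖)) * ‖S h‖ := h1
    _ ≤ Real.exp (assocFn Mp (τ * ‖h‖)) * max C' 1 :=
        mul_le_mul_of_nonneg_left h2 (Real.exp_pos _).le
    _ = max C' 1 * Real.exp (assocFn Mp (τ * ‖h‖)) := mul_comm _ _
end

section
/- Let (M_p)_{p∈ℕ} be a sequence of positive real numbers with M_0 = 1 and lim_{p→∞} M_p^{1/p} = ∞ satisfying conditions (M.1), (M.2) and (M.3), with associated function M. Let ω : ℝ^d → (0,∞) be a function such that for every τ > 0 there exists C_τ > 0 with ω(h) ≤ C_τ e^{M(τ|h|)} for all h ∈ ℝ^d. Then there exist a nondecreasing sequence (l_p)_{p≥1} of positive real numbers with l_p → ∞ and a constant C > 0 such that ω(h) ≤ C e^{N_{l_p}(|h|)} for all h ∈ ℝ^d, where N_{l_p}(ρ) = sup_{p∈ℕ} log₊( ρ^p / (M_p ∏_{j=1}^{p} l_j) ). -/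
open Real Filter

/-- The associated function `N_{l_p}(ρ) = sup_{p∈ℕ} log₊(ρ^p / (M_p ∏_{j=1}^p l_j))`. -/
noncomputable def assocFnSeq (Mp : ℕ → ℝ) (l : ℕ → ℝ) (ρ : ℝ) : ℝ :=
  ⨆ p : ℕ, max (Real.log (ρ ^ p / (Mp p * ∏ j ∈ Finset.Icc 1 p, l j))) 0

private lemma bdd_aux {f : ℕ → ℝ} (h0 : ∀ p, 0 ≤ f p) (N : ℕ) (h : ∀ p, N ≤ p → f p = 0) :
    BddAbove (Set.range f) := by
  refine ⟨(Finset.range (N + 1)).sup' (by simp) f, ?_⟩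
  rintro x ⟨p, rfl⟩
  rcases le_or_gt p N with hp | hp
  · exact Finset.le_sup' f (Finset.mem_range.mpr (by omega))
  · rw [h p hp.le]
    calc (0 : ℝ) ≤ f 0 := h0 0
      _ ≤ _ := Finset.le_sup' f (Finset.mem_range.mpr (by omega))

theorem stmt_4 (d : ℕ) (Mp : ℕ → ℝ) (hpos : ∀ p, 0 < Mp p) (hM0 : Mp 0 = 1)
    (hlim : Tendsto (fun p : ℕ => Mp p ^ (p : ℝ)⁻¹) atTop atTop)
    (hM1 : ∀ p : ℕ, Mp (p + 1) ^ 2 ≤ Mp p * Mp (p + 2))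
    (c0 H : ℝ) (hc0 : 1 ≤ c0) (hH : 1 ≤ H)
    (hM2 : ∀ p q : ℕ, Mp (p + q) ≤ c0 * H ^ (p + q) * (Mp p * Mp q))
    (hM3 : ∀ q : ℕ, 1 ≤ q →
      ∑' k : ℕ, Mp (q + k) / Mp (q + k + 1) ≤ c0 * q * (Mp q / Mp (q + 1)))
    (ω : EuclideanSpace ℝ (Fin d) → ℝ) (hω : ∀ h, 0 < ω h)
    (hbound : ∀ τ > (0 : ℝ), ∃ C > (0 : ℝ), ∀ h : EuclideanSpace ℝ (Fin d),
      ω h ≤ C * Real.exp (assocFn Mp (τ * ‖h‖))) :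
    ∃ l : ℕ → ℝ, (∀ p, 0 < l p) ∧ Monotone l ∧ Tendsto l atTop atTop ∧
      ∃ C > (0 : ℝ), ∀ h : EuclideanSpace ℝ (Fin d),
        ω h ≤ C * Real.exp (assocFnSeq Mp l ‖h‖) := by
  clear hM1 hM2 hM3 hc0 hH
  -- Step 0 : thresholds from hlim
  have hPf' : ∀ r : ℝ, ∃ N : ℕ, ∀ p ≥ N, r ≤ Mp p ^ (p : ℝ)⁻¹ := fun r =>
    eventually_atTop.mp (hlim.eventually_ge_atTop r)
  choose Pf hPf using hPf'
  have hPow : ∀ r : ℝ, 0 ≤ r → ∀ p : ℕ, Pf r ≤ p → 1 ≤ p → r ^ p ≤ Mp p := by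
    intro r hr p hp hp1
    have h1 : r ≤ Mp p ^ (p : ℝ)⁻¹ := hPf r p hp
    have h2 : (Mp p ^ ((p : ℝ)⁻¹)) ^ (p : ℕ) = Mp p := by
      rw [← Real.rpow_natCast (Mp p ^ ((p : ℝ)⁻¹)) p, ← Real.rpow_mul (hpos p).le,
        inv_mul_cancel₀ (by exact_mod_cast (by omega : p ≠ 0)), Real.rpow_one]
    calc r ^ p ≤ (Mp p ^ ((p : ℝ)⁻¹)) ^ p := pow_le_pow_left₀ hr h1 p
      _ = Mp p := h2
  -- boundedness of the families defining the associated functions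
  have hbddFn : ∀ L : ℕ → ℝ, (∀ p, 1 ≤ L p) → ∀ r : ℝ, 0 ≤ r →
      BddAbove (Set.range fun p : ℕ => max (Real.log (r ^ p / (Mp p * L p))) 0) := by
    intro L hL r hr
    apply bdd_aux (fun p => le_max_right _ _) (max (Pf (r + 1)) 1)
    intro p hp
    have hLp : (0 : ℝ) < L p := lt_of_lt_of_le one_pos (hL p)
    have h1 : r ^ p ≤ Mp p * L p := by
      calc r ^ p ≤ (r + 1) ^ p := pow_le_pow_left₀ hr (by linarith) p
        _ ≤ Mp p := hPow (r + 1) (by linarith) p (le_trans (le_max_left _ _) hp)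
            (le_trans (le_max_right _ _) hp)
        _ = Mp p * 1 := (mul_one _).symm
        _ ≤ Mp p * L p := mul_le_mul_of_nonneg_left (hL p) (hpos p).le
    have h2 : Real.log (r ^ p / (Mp p * L p)) ≤ 0 := by
      apply Real.log_nonpos
      · have := hpos p
        positivity
      · rw [div_le_one (by have := hpos p; positivity)]
        exact h1
    simp [max_eq_right h2]
  have hbddFn1 : ∀ r : ℝ, 0 ≤ r →
      BddAbove (Set.range fun p : ℕ => max (Real.log (r ^ p / Mp p)) 0) := by
    intro r hr
    have := hbddFn (fun _ => 1) (fun _ => le_rfl) r hr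
    simpa using this
  -- monotonicity of assocFn
  have hfnmono : ∀ r r' : ℝ, 0 ≤ r → r ≤ r' → assocFn Mp r ≤ assocFn Mp r' := by
    intro r r' hr hrr
    apply ciSup_le
    intro p
    apply le_ciSup_of_le (hbddFn1 r' (le_trans hr hrr)) p
    rcases le_or_gt (r ^ p / Mp p) 1 with h1 | h1
    · rw [max_eq_right (Real.log_nonpos (by have := hpos p; positivity) h1)]
      exact le_max_right _ _
    · refine max_le_max ?_ le_rfl
      exact Real.log_le_log (lt_trans one_pos h1)
        ((div_le_div_iff_of_pos_right (hpos p)).mpr (pow_le_pow_left₀ hr hrr p))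
  -- constants from hbound, one for each scale
  set t : ℕ → ℝ := fun k => 2 * ((k : ℝ) + 1) with ht_def
  have htpos : ∀ k, (0 : ℝ) < t k := by
    intro k
    rw [ht_def]
    positivity
  have ht2 : ∀ k, (2 : ℝ) ≤ t k := by
    intro k
    show (2:ℝ) ≤ 2 * ((k:ℝ) + 1)
    have : (0:ℝ) ≤ (k:ℝ) := Nat.cast_nonneg k
    nlinarith
  have hA' : ∀ k : ℕ, ∃ C, 0 < C ∧ ∀ h, ω h ≤ C * Real.exp (assocFn Mp ((1 / t k) * ‖h‖)) := by
    intro k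
    obtain ⟨C, hC, hCb⟩ := hbound (1 / t k) (by have := htpos k; positivity)
    exact ⟨C, hC, hCb⟩
  choose A hApos hAb using hA'
  set A' : ℕ → ℝ := fun k => max 1 (A k) with hA'_def
  have hA'1 : ∀ k, (1 : ℝ) ≤ A' k := fun k => le_max_left _ _
  have hA'b : ∀ k h, ω h ≤ A' k * Real.exp (assocFn Mp ((1 / t k) * ‖h‖)) := by
    intro k h
    refine le_trans (hAb k h) ?_
    exact mul_le_mul_of_nonneg_right (le_max_right _ _) (Real.exp_pos _).le
  -- the integers m k with log (A' k) ≤ m k * log 2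
  set m : ℕ → ℕ := fun k => max 1 ⌈Real.log (A' k) / Real.log 2⌉₊ with hm_def
  have hm1 : ∀ k, 1 ≤ m k := fun k => le_max_left _ _
  have hmlog : ∀ k, Real.log (A' k) ≤ (m k : ℝ) * Real.log 2 := by
    intro k
    have hlog2 : (0 : ℝ) < Real.log 2 := Real.log_pos (by norm_num)
    have h1 : Real.log (A' k) / Real.log 2 ≤ (⌈Real.log (A' k) / Real.log 2⌉₊ : ℝ) :=
      Nat.le_ceil _
    have h2 : ((⌈Real.log (A' k) / Real.log 2⌉₊ : ℕ) : ℝ) ≤ (m k : ℝ) := by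
      exact_mod_cast le_max_right _ _
    rw [div_le_iff₀ hlog2] at h1
    calc Real.log (A' k) ≤ (⌈Real.log (A' k) / Real.log 2⌉₊ : ℝ) * Real.log 2 := h1
      _ ≤ (m k : ℝ) * Real.log 2 := mul_le_mul_of_nonneg_right h2 hlog2.le
  -- the thresholds S k
  set S : ℕ → ℝ := fun k => max 1 ((Finset.range (m k + 1)).sup'
    (by simp) (fun p => Mp (m k) / Mp p)) with hS_def
  have hS1 : ∀ k, (1 : ℝ) ≤ S k := fun k => le_max_left _ _
  have hSp : ∀ k p, p ≤ m k → Mp (m k) / Mp p ≤ S k := by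
    intro k p hp
    have h1 : Mp (m k) / Mp p ≤ (Finset.range (m k + 1)).sup' (by simp)
        (fun p => Mp (m k) / Mp p) :=
      Finset.le_sup' (fun p => Mp (m k) / Mp p) (Finset.mem_range.mpr (by omega))
    exact le_trans h1 (le_max_right _ _)
  -- the radii R k
  obtain ⟨R, hR0, hRs⟩ : ∃ R : ℕ → ℝ, R 0 = max 1 (t 1 * S 1) ∧
      ∀ k, R (k + 1) = max (R k + 1) (max ((k : ℝ) + 1) (t (k + 2) * S (k + 2))) :=
    ⟨fun k => Nat.rec (max 1 (t 1 * S 1))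
      (fun n Rn => max (Rn + 1) (max ((n : ℝ) + 1) (t (n + 2) * S (n + 2)))) k,
      rfl, fun _ => rfl⟩
  have hR1 : ∀ k, (1 : ℝ) ≤ R k := by
    intro k
    induction k with
    | zero => rw [hR0]; exact le_max_left _ _
    | succ n ih => rw [hRs]; calc (1:ℝ) ≤ R n + 1 := by linarith
                                _ ≤ _ := le_max_left _ _
  have hRk : ∀ k : ℕ, (k : ℝ) ≤ R k := by
    intro k
    cases k with
    | zero => simpa using le_trans zero_le_one (hR1 0)
    | succ n =>
      rw [hRs]
      push_cast
      exact le_trans (le_max_left _ _) (le_max_right _ _)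
  have hRS : ∀ k, t (k + 1) * S (k + 1) ≤ R k := by
    intro k
    cases k with
    | zero => rw [hR0]; exact le_max_right _ _
    | succ n => rw [hRs]; exact le_trans (le_max_right _ _) (le_max_right _ _)
  -- the index blocks q k
  obtain ⟨q, hq0, hqs⟩ : ∃ q : ℕ → ℕ, q 0 = 0 ∧
      ∀ k, q (k + 1) = max (q k + 1) (max (m k) (Pf (R k))) :=
    ⟨fun k => Nat.rec 0 (fun n qn => max (qn + 1) (max (m n) (Pf (R n)))) k, rfl, fun _ => rfl⟩
  have hqlt : ∀ k, q k < q (k + 1) := by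
    intro k
    rw [hqs]
    omega
  have hqmono : StrictMono q := strictMono_nat_of_lt_succ hqlt
  have hqm : ∀ k, m k ≤ q (k + 1) := by intro k; rw [hqs]; omega
  have hqP : ∀ k, Pf (R k) ≤ q (k + 1) := by intro k; rw [hqs]; omega
  have hqk : ∀ k, k ≤ q k := by
    intro k
    induction k with
    | zero => omega
    | succ n ih => have := hqlt n; omega
  -- the sequence l
  set g : ℕ → ℕ := fun j => Nat.findGreatest (fun k => q k < j) j with hg_def
  set l : ℕ → ℝ := fun j => (g j : ℝ) + 1 with hl_def
  have hgspec : ∀ j, 1 ≤ j → q (g j) < j := by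
    intro j hj
    exact Nat.findGreatest_spec (P := fun k => q k < j) (Nat.zero_le j)
      (show q 0 < j by omega)
  have hlpos : ∀ j, (0 : ℝ) < l j := by
    intro j
    show (0:ℝ) < (g j : ℝ) + 1
    positivity
  have hl1 : ∀ j, (1 : ℝ) ≤ l j := by
    intro j
    show (1:ℝ) ≤ (g j : ℝ) + 1
    have : (0:ℝ) ≤ (g j : ℝ) := Nat.cast_nonneg _
    linarith
  have hgmono : Monotone g := by
    intro a b hab
    rcases Nat.eq_zero_or_pos a with ha | ha
    · subst ha
      have : g 0 = 0 := Nat.findGreatest_zero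
      omega
    · exact Nat.le_findGreatest (le_trans (Nat.findGreatest_le a) hab)
        (show q (g a) < b from lt_of_lt_of_le (hgspec a ha) hab)
  have hlmono : Monotone l := by
    intro a b hab
    show (g a : ℝ) + 1 ≤ (g b : ℝ) + 1
    have : ((g a : ℝ)) ≤ (g b : ℝ) := Nat.cast_le.mpr (hgmono hab)
    linarith
  have hltend : Tendsto l atTop atTop := by
    rw [tendsto_atTop_atTop]
    intro b
    obtain ⟨K, hK⟩ := exists_nat_ge b
    refine ⟨q K + 1, fun j hj => ?_⟩
    have h1 : K ≤ g j := Nat.le_findGreatest (by have := hqk K; omega)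
      (show q K < j by omega)
    have h2 : (K : ℝ) ≤ (g j : ℝ) := by exact_mod_cast h1
    show b ≤ (g j : ℝ) + 1
    linarith
  have hgle : ∀ k j, j ≤ q (k + 1) → g j ≤ k := by
    intro k j hj
    rcases Nat.eq_zero_or_pos j with hj0 | hj0
    · subst hj0
      have : g 0 ≤ 0 := Nat.findGreatest_le 0
      omega
    · by_contra hc
      push_neg at hc
      have h1 : q (k + 1) ≤ q (g j) := hqmono.le_iff_le.mpr (by omega)
      have := hgspec j hj0
      omega
  have hlle : ∀ k j, j ≤ q (k + 1) → l j ≤ (k : ℝ) + 1 := by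
    intro k j hj
    show (g j : ℝ) + 1 ≤ (k : ℝ) + 1
    have : ((g j : ℝ)) ≤ (k : ℝ) := Nat.cast_le.mpr (hgle k j hj)
    linarith
  -- facts about the products
  have hLge : ∀ p, (1 : ℝ) ≤ ∏ j ∈ Finset.Icc 1 p, l j := by
    intro p
    have h1 : (∏ _j ∈ Finset.Icc 1 p, (1 : ℝ)) ≤ ∏ j ∈ Finset.Icc 1 p, l j :=
      Finset.prod_le_prod (fun _ _ => zero_le_one) (fun j _ => hl1 j)
    simpa using h1
  have hLle : ∀ k p, p ≤ q (k + 1) → (∏ j ∈ Finset.Icc 1 p, l j) ≤ ((k : ℝ) + 1) ^ p := by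
    intro k p hp
    calc (∏ j ∈ Finset.Icc 1 p, l j) ≤ ∏ _j ∈ Finset.Icc 1 p, ((k : ℝ) + 1) := by
          refine Finset.prod_le_prod (fun j _ => (hlpos j).le) (fun j hj => ?_)
          exact hlle k j (le_trans (Finset.mem_Icc.mp hj).2 hp)
      _ = ((k : ℝ) + 1) ^ p := by
          rw [Finset.prod_const, Nat.card_Icc]
          norm_num
  -- the main band estimate
  have hband : ∀ k : ℕ, ∀ ρ : ℝ, 0 < ρ → S k ≤ ρ / t k → ρ ≤ R k →
      Real.log (A' k) + assocFn Mp ((1 / t k) * ρ) ≤ assocFnSeq Mp l ρ := by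
    intro k ρ hρ hσS hρR
    have htk := htpos k
    set σ := ρ / t k with hσ_def
    have hσρeq : (1 / t k) * ρ = σ := by rw [hσ_def]; ring
    have hσpos : 0 < σ := div_pos hρ htk
    have hσ1 : (1 : ℝ) ≤ σ := le_trans (hS1 k) hσS
    have hρeq : ρ = t k * σ := by rw [hσ_def]; field_simp
    have hσleρ : σ ≤ ρ := by nlinarith [ht2 k]
    have hbddNρ := hbddFn (fun p => ∏ j ∈ Finset.Icc 1 p, l j) hLge ρ hρ.le
    have hkey : ∀ p : ℕ, p ≤ q (k + 1) →
        (p : ℝ) * Real.log 2 + Real.log (σ ^ p / Mp p) ≤ assocFnSeq Mp l ρ := by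
      intro p hp
      have hLp1 : (1 : ℝ) ≤ ∏ j ∈ Finset.Icc 1 p, l j := hLge p
      have hLppos : (0 : ℝ) < ∏ j ∈ Finset.Icc 1 p, l j := lt_of_lt_of_le one_pos hLp1
      have hLple : (∏ j ∈ Finset.Icc 1 p, l j) ≤ ((k : ℝ) + 1) ^ p := hLle k p hp
      have hX : (0 : ℝ) < σ ^ p := pow_pos hσpos p
      have hMpp := hpos p
      have h2 : (2 : ℝ) ^ p * σ ^ p / Mp p ≤ ρ ^ p / (Mp p * ∏ j ∈ Finset.Icc 1 p, l j) := by
        rw [div_le_div_iff₀ hMpp (by positivity)]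
        have hρp : ρ ^ p = 2 ^ p * ((k : ℝ) + 1) ^ p * σ ^ p := by
          rw [hρeq, mul_pow, show t k = 2 * ((k : ℝ) + 1) from rfl, mul_pow]
        rw [hρp]
        have hmul : (2 : ℝ) ^ p * σ ^ p * (∏ j ∈ Finset.Icc 1 p, l j) ≤
            2 ^ p * σ ^ p * ((k : ℝ) + 1) ^ p :=
          mul_le_mul_of_nonneg_left hLple (by positivity)
        nlinarith [mul_le_mul_of_nonneg_right hmul hMpp.le]
      have h3 : Real.log ((2 : ℝ) ^ p * σ ^ p / Mp p) ≤ assocFnSeq Mp l ρ := by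
        calc Real.log ((2 : ℝ) ^ p * σ ^ p / Mp p)
            ≤ Real.log (ρ ^ p / (Mp p * ∏ j ∈ Finset.Icc 1 p, l j)) :=
              Real.log_le_log (by positivity) h2
          _ ≤ max (Real.log (ρ ^ p / (Mp p * ∏ j ∈ Finset.Icc 1 p, l j))) 0 := le_max_left _ _
          _ ≤ assocFnSeq Mp l ρ := by
              rw [assocFnSeq]
              exact le_ciSup hbddNρ p
      have h4 : Real.log ((2 : ℝ) ^ p * σ ^ p / Mp p)
          = (p : ℝ) * Real.log 2 + Real.log (σ ^ p / Mp p) := by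
        rw [mul_div_assoc, Real.log_mul (by positivity) (ne_of_gt (div_pos hX hMpp)),
          Real.log_pow]
      linarith
    have hMa : Mp (m k) ≤ σ ^ (m k) := by
      have h1 : Mp (m k) / Mp 0 ≤ S k := hSp k 0 (by have := hm1 k; omega)
      rw [hM0, div_one] at h1
      calc Mp (m k) ≤ S k := h1
        _ ≤ σ := hσS
        _ ≤ σ ^ (m k) := le_self_pow₀ hσ1 (by have := hm1 k; omega)
    have hta : 0 ≤ Real.log (σ ^ (m k) / Mp (m k)) :=
      Real.log_nonneg ((one_le_div (hpos _)).mpr hMa)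
    have hNa := hkey (m k) (hqm k)
    have hA'N : Real.log (A' k) ≤ ((m k : ℝ)) * Real.log 2 := hmlog k
    rw [hσρeq, add_comm, ← le_sub_iff_add_le, assocFn]
    apply ciSup_le
    intro p
    rw [le_sub_iff_add_le]
    rcases le_or_gt (Real.log (σ ^ p / Mp p)) 0 with hneg | hposl
    · rw [max_eq_right hneg]
      linarith
    · rw [max_eq_left hposl.le]
      have hpq : p ≤ q (k + 1) := by
        by_contra hc
        push_neg at hc
        have hp1 : 1 ≤ p := by have := hqk (k + 1); omega
        have h1 : R k ^ p ≤ Mp p :=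
          hPow (R k) (le_trans zero_le_one (hR1 k)) p (by have := hqP k; omega) hp1
        have h2 : σ ^ p ≤ Mp p :=
          le_trans (pow_le_pow_left₀ hσpos.le (le_trans hσleρ hρR) p) h1
        have h3 : Real.log (σ ^ p / Mp p) ≤ 0 :=
          Real.log_nonpos (div_nonneg (pow_nonneg hσpos.le p) (hpos p).le)
            ((div_le_one (hpos p)).mpr h2)
        linarith
      rcases le_or_gt (m k) p with hap | hpa
      · have h1 := hkey p hpq
        have h2 : Real.log (A' k) ≤ (p : ℝ) * Real.log 2 := by
          refine le_trans (hmlog k) ?_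
          exact mul_le_mul_of_nonneg_right (by exact_mod_cast hap)
            (Real.log_nonneg one_le_two)
        linarith
      · have hmono : σ ^ p / Mp p ≤ σ ^ (m k) / Mp (m k) := by
          rw [div_le_div_iff₀ (hpos p) (hpos (m k))]
          have h1 : Mp (m k) / Mp p ≤ σ := le_trans (hSp k p hpa.le) hσS
          have h1' : Mp (m k) ≤ σ * Mp p := by
            rw [div_le_iff₀ (hpos p)] at h1
            exact h1
          have h2 : σ ≤ σ ^ (m k - p) := le_self_pow₀ hσ1 (by omega)
          have h3 : Mp (m k) ≤ σ ^ (m k - p) * Mp p := by nlinarith [hpos p]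
          calc σ ^ p * Mp (m k) ≤ σ ^ p * (σ ^ (m k - p) * Mp p) :=
                mul_le_mul_of_nonneg_left h3 (pow_nonneg hσpos.le p)
            _ = σ ^ (m k) * Mp p := by
                rw [← mul_assoc, ← pow_add]
                congr 2
                omega
        have hlog : Real.log (σ ^ p / Mp p) ≤ Real.log (σ ^ (m k) / Mp (m k)) :=
          Real.log_le_log (div_pos (pow_pos hσpos p) (hpos p)) hmono
        linarith
  -- conclusion
  set C : ℝ := max 1 (A' 0 * Real.exp (assocFn Mp ((1 / t 0) * R 0))) with hC_def
  refine ⟨l, hlpos, hlmono, hltend, C, lt_of_lt_of_le one_pos (le_max_left _ _), ?_⟩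
  intro h
  have hρ0 : (0 : ℝ) ≤ ‖h‖ := norm_nonneg h
  have hN0 : 0 ≤ assocFnSeq Mp l ‖h‖ := by
    have hb := hbddFn (fun p => ∏ j ∈ Finset.Icc 1 p, l j) hLge ‖h‖ hρ0
    rw [assocFnSeq]
    exact le_ciSup_of_le hb 0 (le_max_right _ _)
  have hexp1 : 1 ≤ Real.exp (assocFnSeq Mp l ‖h‖) := by
    rw [← Real.exp_zero]
    exact Real.exp_le_exp.mpr hN0
  have hex : ∃ n : ℕ, ‖h‖ ≤ R n := by
    obtain ⟨n, hn⟩ := exists_nat_ge ‖h‖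
    exact ⟨n, le_trans hn (hRk n)⟩
  rcases eq_or_ne (Nat.find hex) 0 with h0 | hne
  · have hρR : ‖h‖ ≤ R 0 := h0 ▸ Nat.find_spec hex
    have h1 : ω h ≤ A' 0 * Real.exp (assocFn Mp ((1 / t 0) * ‖h‖)) := hA'b 0 h
    have h2 : assocFn Mp ((1 / t 0) * ‖h‖) ≤ assocFn Mp ((1 / t 0) * R 0) := by
      apply hfnmono _ _ (by have := htpos 0; positivity)
      exact mul_le_mul_of_nonneg_left hρR (by have := htpos 0; positivity)
    calc ω h ≤ A' 0 * Real.exp (assocFn Mp ((1 / t 0) * R 0)) :=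
          le_trans h1 (mul_le_mul_of_nonneg_left (Real.exp_le_exp.mpr h2)
            (le_trans zero_le_one (hA'1 0)))
      _ ≤ C := le_max_right _ _
      _ ≤ C * Real.exp (assocFnSeq Mp l ‖h‖) :=
          le_mul_of_one_le_right (le_trans zero_le_one (le_max_left _ _)) hexp1
  · obtain ⟨k', hk'⟩ := Nat.exists_eq_succ_of_ne_zero hne
    have hkR : ‖h‖ ≤ R (k' + 1) := by
      have h1 := Nat.find_spec hex
      rw [hk'] at h1
      exact h1
    have hlt : R k' < ‖h‖ := by
      have h1 := Nat.find_min hex (show k' < Nat.find hex by omega)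
      exact lt_of_not_ge h1
    have hρpos : 0 < ‖h‖ := lt_of_lt_of_le (lt_of_lt_of_le one_pos (hR1 k')) hlt.le
    have hσS : S (k' + 1) ≤ ‖h‖ / t (k' + 1) := by
      rw [le_div_iff₀ (htpos (k' + 1))]
      calc S (k' + 1) * t (k' + 1) = t (k' + 1) * S (k' + 1) := mul_comm _ _
        _ ≤ R k' := hRS k'
        _ ≤ ‖h‖ := hlt.le
    have hb := hband (k' + 1) ‖h‖ hρpos hσS hkR
    calc ω h ≤ A' (k' + 1) * Real.exp (assocFn Mp ((1 / t (k' + 1)) * ‖h‖)) := hA'b _ h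
      _ = Real.exp (Real.log (A' (k' + 1)) + assocFn Mp ((1 / t (k' + 1)) * ‖h‖)) := by
          rw [Real.exp_add, Real.exp_log (lt_of_lt_of_le one_pos (hA'1 _))]
      _ ≤ Real.exp (assocFnSeq Mp l ‖h‖) := Real.exp_le_exp.mpr hb
      _ ≤ C * Real.exp (assocFnSeq Mp l ‖h‖) :=
          le_mul_of_one_le_left (Real.exp_pos _).le (le_max_left _ _)
end

section
/- Let 1 ≤ p < ∞ and let η : ℝ^d → (0,∞) be measurable with ω_η(h) < ∞ for every h ∈ ℝ^d. Then for each h ∈ ℝ^d the translation T_{-h} is a bounded linear operator on L^p_η, one has ‖T_{-h} g‖_{L^p_η} ≤ ω_η(h) ‖g‖_{L^p_η} for every g ∈ L^p_η, and ω_η(h) is the operator norm of T_{-h} on L^p_η, i.e. ω_η(h) = sup{ ‖T_{-h} g‖_{L^p_η} : g ∈ L^p_η, ‖g‖_{L^p_η} ≤ 1 }. -/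
open MeasureTheory ENNReal

/-- The weight function `ω_η(h) = ess sup_x η(x+h)/η(x)` of a weight `η`. -/
noncomputable def weightFn (d : ℕ) (η : EuclideanSpace ℝ (Fin d) → ℝ)
    (h : EuclideanSpace ℝ (Fin d)) : ℝ≥0∞ :=
  essSup (fun x => ENNReal.ofReal (η (x + h) / η x)) volume

section aux

variable {d : ℕ}

private lemma lint_translate (h : EuclideanSpace ℝ (Fin d))
    (f : EuclideanSpace ℝ (Fin d) → ℝ≥0∞) :
    ∫⁻ x, f (x - h) = ∫⁻ x, f x :=
  (measurePreserving_sub_right volume h).lintegral_comp_emb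
    (MeasurableEquiv.subRight h).measurableEmbedding f

private lemma essSup_translate (h : EuclideanSpace ℝ (Fin d))
    (f : EuclideanSpace ℝ (Fin d) → ℝ≥0∞) (hf : Measurable f) :
    essSup (fun x => f (x - h)) volume = essSup f volume := by
  have hmap := (measurePreserving_sub_right (volume : Measure (EuclideanSpace ℝ (Fin d))) h).map_eq
  rw [show (fun x => f (x - h)) = f ∘ (fun x => x - h) from rfl,
    ← essSup_map_measure (by rw [hmap]; exact hf.aemeasurable)
      (measurable_sub_const h).aemeasurable, hmap]

private lemma wf_meas (η : EuclideanSpace ℝ (Fin d) → ℝ) (hmeas : Measurable η)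
    (h : EuclideanSpace ℝ (Fin d)) :
    Measurable (fun y : EuclideanSpace ℝ (Fin d) => ENNReal.ofReal (η (y + h) / η y)) :=
  ((hmeas.comp (measurable_add_const h)).div hmeas).ennreal_ofReal

private lemma omega_eq (η : EuclideanSpace ℝ (Fin d) → ℝ) (hmeas : Measurable η)
    (h : EuclideanSpace ℝ (Fin d)) :
    essSup (fun x => ENNReal.ofReal (η x / η (x - h))) volume = weightFn d η h := by
  have heq : (fun x : EuclideanSpace ℝ (Fin d) => ENNReal.ofReal (η x / η (x - h)))
      = fun x => (fun y => ENNReal.ofReal (η (y + h) / η y)) (x - h) := by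
    funext x; simp
  rw [heq, essSup_translate h _ (wf_meas η hmeas h)]
  rfl

private lemma nnnorm_eq (η : EuclideanSpace ℝ (Fin d) → ℝ) (hpos : ∀ x, 0 < η x)
    (h : EuclideanSpace ℝ (Fin d)) (g : EuclideanSpace ℝ (Fin d) → ℝ)
    (x : EuclideanSpace ℝ (Fin d)) :
    (‖η x * g (x - h)‖₊ : ℝ≥0∞)
      = ENNReal.ofReal (η x / η (x - h)) * (‖η (x - h) * g (x - h)‖₊ : ℝ≥0∞) := by
  rw [← (fun a : ℝ => (ofReal_norm a).trans (enorm_eq_nnnorm a)), ← (fun a : ℝ => (ofReal_norm a).trans (enorm_eq_nnnorm a)),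
    ← ENNReal.ofReal_mul (div_nonneg (hpos x).le (hpos (x - h)).le)]
  congr 1
  rw [Real.norm_eq_abs, Real.norm_eq_abs, abs_mul, abs_mul,
    abs_of_pos (hpos x), abs_of_pos (hpos (x - h)), eq_comm, div_mul_eq_mul_div,
    div_eq_iff (hpos (x - h)).ne']
  ring

private lemma part1 (p : ℝ≥0∞) (hp1 : 1 ≤ p) (hp : p ≠ ∞)
    (η : EuclideanSpace ℝ (Fin d) → ℝ) (hmeas : Measurable η) (hpos : ∀ x, 0 < η x)
    (hfin : ∀ h, weightFn d η h ≠ ∞) (h : EuclideanSpace ℝ (Fin d))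
    (g : EuclideanSpace ℝ (Fin d) → ℝ) :
    eLpNorm (fun x => η x * g (x - h)) p volume ≤
      weightFn d η h * eLpNorm (fun x => η x * g x) p volume := by
  have hp0 : p ≠ 0 := (zero_lt_one.trans_le hp1).ne'
  set q := p.toReal with hqdef
  have hq : 0 < q := ENNReal.toReal_pos hp0 hp
  rw [eLpNorm_eq_lintegral_rpow_enorm_toReal hp0 hp, eLpNorm_eq_lintegral_rpow_enorm_toReal hp0 hp]
  set ω := weightFn d η h with hωdef
  have hbd : ∀ᵐ x ∂(volume : Measure (EuclideanSpace ℝ (Fin d))),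
      ENNReal.ofReal (η x / η (x - h)) ≤ ω := by
    have := ae_le_essSup (μ := (volume : Measure (EuclideanSpace ℝ (Fin d))))
      (fun x => ENNReal.ofReal (η x / η (x - h)))
    rwa [omega_eq η hmeas h] at this
  have key : ∫⁻ x, (‖η x * g (x - h)‖₊ : ℝ≥0∞) ^ q
      ≤ ω ^ q * ∫⁻ x, (‖η x * g x‖₊ : ℝ≥0∞) ^ q := by
    have htr : ∫⁻ x, (‖η (x - h) * g (x - h)‖₊ : ℝ≥0∞) ^ q
        = ∫⁻ x, (‖η x * g x‖₊ : ℝ≥0∞) ^ q :=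
      lint_translate h (fun y => (‖η y * g y‖₊ : ℝ≥0∞) ^ q)
    rw [← htr, ← lintegral_const_mul' _ _ (ENNReal.rpow_ne_top_of_nonneg hq.le (hfin h))]
    refine lintegral_mono_ae ?_
    filter_upwards [hbd] with x hx
    rw [nnnorm_eq η hpos h g x, ENNReal.mul_rpow_of_nonneg _ _ hq.le]
    exact mul_le_mul_left (ENNReal.rpow_le_rpow hx hq.le) _
  calc (∫⁻ x, (‖η x * g (x - h)‖₊ : ℝ≥0∞) ^ q) ^ (1 / q)
      ≤ (ω ^ q * ∫⁻ x, (‖η x * g x‖₊ : ℝ≥0∞) ^ q) ^ (1 / q) :=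
        ENNReal.rpow_le_rpow key (by positivity)
    _ = ω * (∫⁻ x, (‖η x * g x‖₊ : ℝ≥0∞) ^ q) ^ (1 / q) := by
        rw [ENNReal.mul_rpow_of_nonneg _ _ (by positivity), ← ENNReal.rpow_mul,
          mul_one_div_cancel hq.ne', ENNReal.rpow_one]

end aux

theorem stmt_5 (d : ℕ) (p : ℝ≥0∞) (hp1 : 1 ≤ p) (hp : p ≠ ∞)
    (η : EuclideanSpace ℝ (Fin d) → ℝ) (hmeas : Measurable η) (hpos : ∀ x, 0 < η x)
    (hfin : ∀ h, weightFn d η h ≠ ∞) (h : EuclideanSpace ℝ (Fin d)) :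
    (∀ g : EuclideanSpace ℝ (Fin d) → ℝ,
      eLpNorm (fun x => η x * g (x - h)) p volume ≤
        weightFn d η h * eLpNorm (fun x => η x * g x) p volume) ∧
    weightFn d η h =
      ⨆ g : {g : EuclideanSpace ℝ (Fin d) → ℝ //
          Measurable g ∧ eLpNorm (fun x => η x * g x) p volume ≤ 1},
        eLpNorm (fun x => η x * g.1 (x - h)) p volume := by
  have hp0 : p ≠ 0 := (zero_lt_one.trans_le hp1).ne'
  set q := p.toReal with hqdef
  have hq : 0 < q := ENNReal.toReal_pos hp0 hp
  refine ⟨part1 p hp1 hp η hmeas hpos hfin h, le_antisymm ?_ ?_⟩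
  · -- weightFn ≤ iSup
    refine le_of_forall_lt_imp_le_of_dense ?_
    intro c hc
    set f := fun y : EuclideanSpace ℝ (Fin d) => ENNReal.ofReal (η (y + h) / η y) with hfdef
    have hfm : Measurable f := wf_meas η hmeas h
    have hApos : 0 < volume {y | c < f y} := by
      rcases eq_zero_or_pos (volume {y | c < f y}) with h0 | h0
      · exfalso
        have hae : ∀ᵐ y ∂(volume : Measure (EuclideanSpace ℝ (Fin d))), f y ≤ c := by
          rw [ae_iff]
          simpa [not_le] using h0
        exact absurd (essSup_le_of_ae_le c hae) (not_le_of_gt hc)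
      · exact h0
    obtain ⟨S, hSm, hSsub, hSpos, hSfin⟩ :=
      Measure.exists_subset_measure_lt_top (measurableSet_lt measurable_const hfm) hApos
    set v : ℝ≥0∞ := volume S ^ (1 / q) with hvdef
    have hv0 : v ≠ 0 := (ENNReal.rpow_pos hSpos hSfin.ne).ne'
    have hvtop : v ≠ ∞ := ENNReal.rpow_ne_top_of_nonneg (by positivity) hSfin.ne
    set a : ℝ := v.toReal⁻¹ with hadef
    have ha : ENNReal.ofReal a = v⁻¹ := by
      rw [hadef, ENNReal.ofReal_inv_of_pos (ENNReal.toReal_pos hv0 hvtop),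
        ENNReal.ofReal_toReal hvtop]
    have ha0 : 0 ≤ a := by positivity
    set g : EuclideanSpace ℝ (Fin d) → ℝ := S.indicator (fun y => a / η y) with hgdef
    have hgm : Measurable g := (measurable_const.div hmeas).indicator hSm
    have hng : (fun x => η x * g x) = S.indicator (fun _ => a) := by
      funext x
      by_cases hx : x ∈ S
      · simp [hgdef, Set.indicator_of_mem hx, mul_div_cancel₀ _ (hpos x).ne']
      · simp [hgdef, Set.indicator_of_notMem hx]
    have hone : ENNReal.ofReal a * v = 1 := by rw [ha]; exact ENNReal.inv_mul_cancel hv0 hvtop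
    have hnorm : eLpNorm (fun x => η x * g x) p volume ≤ 1 := by
      rw [hng, eLpNorm_indicator_const hSm hp0 hp]
      have : ((‖a‖₊ : ℝ≥0∞)) = ENNReal.ofReal a := by
        rw [← (fun a : ℝ => (ofReal_norm a).trans (enorm_eq_nnnorm a)), Real.norm_eq_abs, abs_of_nonneg ha0]
      rw [enorm_eq_nnnorm, this, ← hqdef, ← hvdef, hone]
    refine le_trans ?_ (le_iSup (fun g : {g : EuclideanSpace ℝ (Fin d) → ℝ //
        Measurable g ∧ eLpNorm (fun x => η x * g x) p volume ≤ 1} =>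
        eLpNorm (fun x => η x * g.1 (x - h)) p volume) ⟨g, hgm, hnorm⟩)
    show c ≤ eLpNorm (fun x => η x * g (x - h)) p volume
    rw [eLpNorm_eq_lintegral_rpow_enorm_toReal hp0 hp, ← hqdef]
    have hkey : (c * ENNReal.ofReal a) ^ q * volume S
        ≤ ∫⁻ x, (‖η x * g (x - h)‖₊ : ℝ≥0∞) ^ q := by
      have htr : ∫⁻ x, (‖η x * g (x - h)‖₊ : ℝ≥0∞) ^ q
          = ∫⁻ y, (‖η (y + h) * g y‖₊ : ℝ≥0∞) ^ q := by
        rw [← lint_translate h (fun y => (‖η (y + h) * g y‖₊ : ℝ≥0∞) ^ q)]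
        congr 1
        funext x
        simp
      rw [htr]
      calc (c * ENNReal.ofReal a) ^ q * volume S
          = ∫⁻ _ in S, (c * ENNReal.ofReal a) ^ q ∂volume := by
            rw [setLIntegral_const]
        _ ≤ ∫⁻ y in S, (‖η (y + h) * g y‖₊ : ℝ≥0∞) ^ q ∂volume := by
            refine setLIntegral_mono
              ((((hmeas.comp (measurable_add_const h)).mul hgm).nnnorm.coe_nnreal_ennreal).pow_const q)
              fun y hy => ?_
            refine ENNReal.rpow_le_rpow ?_ hq.le
            have hgy : g y = a / η y := Set.indicator_of_mem hy _
            have hval : (‖η (y + h) * g y‖₊ : ℝ≥0∞)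
                = ENNReal.ofReal (η (y + h) / η y) * ENNReal.ofReal a := by
              rw [← (fun a : ℝ => (ofReal_norm a).trans (enorm_eq_nnnorm a)),
                ← ENNReal.ofReal_mul (div_nonneg (hpos (y + h)).le (hpos y).le)]
              congr 1
              rw [Real.norm_eq_abs, hgy, abs_mul, abs_of_pos (hpos (y + h)),
                abs_div, abs_of_nonneg ha0, abs_of_pos (hpos y)]
              ring
            rw [hval]
            exact mul_le_mul_left (le_of_lt (hSsub hy)) _
        _ ≤ ∫⁻ y, (‖η (y + h) * g y‖₊ : ℝ≥0∞) ^ q ∂volume :=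
            setLIntegral_le_lintegral S _
    calc c = c * (ENNReal.ofReal a * v) := by rw [hone, mul_one]
      _ = ((c * ENNReal.ofReal a) ^ q) ^ (1 / q) * (volume S) ^ (1 / q) := by
          rw [← ENNReal.rpow_mul, mul_one_div_cancel hq.ne', ENNReal.rpow_one, hvdef, mul_assoc]
      _ = ((c * ENNReal.ofReal a) ^ q * volume S) ^ (1 / q) :=
          (ENNReal.mul_rpow_of_nonneg ((c * ENNReal.ofReal a) ^ q) (volume S)
            (by positivity)).symm
      _ ≤ (∫⁻ x, (‖η x * g (x - h)‖₊ : ℝ≥0∞) ^ q) ^ (1 / q) :=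
          ENNReal.rpow_le_rpow hkey (by positivity)
  · -- iSup ≤ weightFn
    refine iSup_le fun g => ?_
    calc eLpNorm (fun x => η x * g.1 (x - h)) p volume
        ≤ weightFn d η h * eLpNorm (fun x => η x * g.1 x) p volume :=
          part1 p hp1 hp η hmeas hpos hfin h g.1
      _ ≤ weightFn d η h * 1 := mul_le_mul_right g.2.2 _
      _ = weightFn d η h := mul_one _
end

section
/- Let M : [0,∞) → [0,∞) be nondecreasing with ∫₁^∞ M(s) s^{-2} ds < ∞, and let η̃(ρ) = ρ ∫_ρ^∞ M(s) s^{-2} ds for ρ > 0, η̃(0) = 0. Then η̃ is nondecreasing on [0,∞) and concave on (0,∞). -/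
open MeasureTheory

/-- `η̃(ρ) = ρ ∫_ρ^∞ M(s) s⁻² ds` (with `η̃(0) = 0`, as the factor `ρ` vanishes). -/
noncomputable def etaTilde (M : ℝ → ℝ) (ρ : ℝ) : ℝ :=
  ρ * ∫ s in Set.Ioi ρ, M s / s ^ 2

theorem stmt_9 (M : ℝ → ℝ) (hnonneg : ∀ s, 0 ≤ s → 0 ≤ M s)
    (hmono : MonotoneOn M (Set.Ici (0 : ℝ)))
    (hint : IntegrableOn (fun s => M s / s ^ 2) (Set.Ioi (1 : ℝ))) :
    MonotoneOn (etaTilde M) (Set.Ici (0 : ℝ)) ∧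
    ConcaveOn ℝ (Set.Ioi (0 : ℝ)) (etaTilde M) := by
  -- an everywhere-monotone extension of `M`
  set N : ℝ → ℝ := fun s => M (max s 0) with hN
  have hNmono : Monotone N := fun a b hab =>
    hmono (Set.mem_Ici.mpr (le_max_right _ _)) (Set.mem_Ici.mpr (le_max_right _ _))
      (max_le_max hab le_rfl)
  have hNmeas : Measurable fun s : ℝ => N s / s ^ 2 :=
    hNmono.measurable.div ((measurable_id.pow_const 2))
  have hNeq : ∀ s : ℝ, 0 < s → N s = M s := fun s hs => by
    simp [hN, max_eq_left hs.le]
  -- integrability on `Ioi ρ` for `ρ > 0`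
  have hI : ∀ ρ : ℝ, 0 < ρ → IntegrableOn (fun s => M s / s ^ 2) (Set.Ioi ρ) := by
    intro ρ hρ
    have h1 : IntegrableOn (fun s => M s / s ^ 2) (Set.Ioi (max ρ 1)) :=
      hint.mono_set (Set.Ioi_subset_Ioi (le_max_right _ _))
    have h2 : IntegrableOn (fun s => M s / s ^ 2) (Set.Ioc ρ (max ρ 1)) := by
      have hb : IntegrableOn (fun s => N s / s ^ 2) (Set.Ioc ρ (max ρ 1)) := by
        apply Measure.integrableOn_of_bounded (M := M (max ρ 1) / ρ ^ 2)
          measure_Ioc_lt_top.ne hNmeas.aestronglyMeasurable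
        filter_upwards [ae_restrict_mem measurableSet_Ioc] with s hs
        have hs0 : 0 < s := hρ.trans hs.1
        have hMs : 0 ≤ N s := hnonneg _ (le_max_right _ _)
        rw [Real.norm_eq_abs, abs_of_nonneg (div_nonneg hMs (sq_nonneg s))]
        rw [hNeq s hs0]
        have h0b : (0:ℝ) ≤ max ρ 1 := le_trans hρ.le (le_max_left ρ 1)
        exact div_le_div₀ (hnonneg (max ρ 1) h0b)
          (hmono (Set.mem_Ici.mpr hs0.le) (Set.mem_Ici.mpr h0b) hs.2)
          (pow_pos hρ 2) (pow_le_pow_left₀ hρ.le hs.1.le 2)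
      exact hb.congr_fun (fun s hs => by show N s / s ^ 2 = M s / s ^ 2; rw [hNeq s (hρ.trans hs.1)]) measurableSet_Ioc
    have := h2.union h1
    rwa [Set.Ioc_union_Ioi_eq_Ioi (le_max_left ρ 1)] at this
  -- value of `∫ s in Ioi y, (s^2)⁻¹`-type integrals
  have hconstIoi : ∀ c y : ℝ, 0 < y → ∫ s in Set.Ioi y, c / s ^ 2 = c / y := by
    intro c y hy
    have h1 : Set.EqOn (fun s : ℝ => c / s ^ 2) (fun s : ℝ => c * s ^ (-2 : ℝ)) (Set.Ioi y) := by
      intro s hs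
      have hs0 : 0 < s := hy.trans hs
      show c / s ^ 2 = c * s ^ (-2 : ℝ)
      rw [Real.rpow_neg hs0.le, div_eq_mul_inv, show (2:ℝ) = ((2:ℕ):ℝ) by norm_num,
        Real.rpow_natCast s 2]
    rw [setIntegral_congr_fun measurableSet_Ioi h1, integral_const_mul,
      integral_Ioi_rpow_of_lt (by norm_num) hy]
    rw [show (-2 : ℝ) + 1 = -1 by norm_num, Real.rpow_neg_one]
    field_simp
  have hconstIoiInt : ∀ c y : ℝ, 0 < y →
      IntegrableOn (fun s : ℝ => c / s ^ 2) (Set.Ioi y) := by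
    intro c y hy
    have h0 : IntegrableOn (fun s : ℝ => c * s ^ (-2 : ℝ)) (Set.Ioi y) :=
      (integrableOn_Ioi_rpow_of_lt (by norm_num : (-2:ℝ) < -1) hy).const_mul c
    apply h0.congr_fun _ measurableSet_Ioi
    intro s hs
    have hs0 : 0 < s := hy.trans hs
    show c * s ^ (-2 : ℝ) = c / s ^ 2
    rw [Real.rpow_neg hs0.le, show (2:ℝ) = ((2:ℕ):ℝ) by norm_num, Real.rpow_natCast s 2,
      ← div_eq_mul_inv]
  -- value of `∫ s in Ioc x y, c / s^2`
  have hconstIoc : ∀ c x y : ℝ, 0 < x → x ≤ y →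
      ∫ s in Set.Ioc x y, c / s ^ 2 = c * (x⁻¹ - y⁻¹) := by
    intro c x y hx hxy
    rw [← intervalIntegral.integral_of_le hxy]
    have h1 : Set.EqOn (fun s : ℝ => c / s ^ 2) (fun s : ℝ => c * s ^ (-2 : ℤ)) (Set.uIcc x y) := by
      intro s hs
      show c / s ^ 2 = c * s ^ (-2 : ℤ)
      rw [zpow_neg, div_eq_mul_inv]
      norm_num
    rw [intervalIntegral.integral_congr h1, intervalIntegral.integral_const_mul,
      integral_zpow (Or.inr ⟨by norm_num, by
        rw [Set.uIcc_of_le hxy]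
        exact fun h => absurd h.1 (not_le.mpr hx)⟩)]
    norm_num
    exact Or.inl (by ring)
  have hconstIocInt : ∀ c x y : ℝ, 0 < x →
      IntegrableOn (fun s : ℝ => c / s ^ 2) (Set.Ioc x y) := fun c x y hx =>
    (hconstIoiInt c x hx).mono_set Set.Ioc_subset_Ioi_self
  -- lower bound for the tail integral
  have hA : ∀ y : ℝ, 0 < y → M y / y ≤ ∫ s in Set.Ioi y, M s / s ^ 2 := by
    intro y hy
    rw [← hconstIoi (M y) y hy]
    refine setIntegral_mono_on (hconstIoiInt (M y) y hy) (hI y hy) measurableSet_Ioi ?_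
    intro s hs
    have hs0 : 0 < s := hy.trans hs
    exact (div_le_div_iff_of_pos_right (pow_pos hs0 2)).mpr
      (hmono (Set.mem_Ici.mpr hy.le) (Set.mem_Ici.mpr hs0.le) (le_of_lt hs))
  -- upper bound for `∫ s in Ioc x y, M s / s^2`
  have hC : ∀ x y : ℝ, 0 < x → x < y →
      x * y * ∫ s in Set.Ioc x y, M s / s ^ 2 ≤ M y * (y - x) := by
    intro x y hx hxy
    have hy : 0 < y := hx.trans hxy
    have h1 : (∫ s in Set.Ioc x y, M s / s ^ 2) ≤ M y * (x⁻¹ - y⁻¹) := by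
      rw [← hconstIoc (M y) x y hx hxy.le]
      refine setIntegral_mono_on ((hI x hx).mono_set Set.Ioc_subset_Ioi_self)
        (hconstIocInt (M y) x y hx) measurableSet_Ioc ?_
      intro s hs
      have hs0 : 0 < s := hx.trans hs.1
      exact (div_le_div_iff_of_pos_right (pow_pos hs0 2)).mpr
        (hmono (Set.mem_Ici.mpr hs0.le) (Set.mem_Ici.mpr hy.le) hs.2)
    have h2 : x * y * (M y * (x⁻¹ - y⁻¹)) = M y * (y - x) := by
      field_simp
    calc x * y * ∫ s in Set.Ioc x y, M s / s ^ 2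
        ≤ x * y * (M y * (x⁻¹ - y⁻¹)) :=
          mul_le_mul_of_nonneg_left h1 (by positivity)
      _ = M y * (y - x) := h2
  -- lower bound for `∫ s in Ioc y z, M s / s^2`
  have hB : ∀ y z : ℝ, 0 < y → y < z →
      M y * (z - y) ≤ y * z * ∫ s in Set.Ioc y z, M s / s ^ 2 := by
    intro y z hy hyz
    have hz : 0 < z := hy.trans hyz
    have h1 : M y * (y⁻¹ - z⁻¹) ≤ ∫ s in Set.Ioc y z, M s / s ^ 2 := by
      rw [← hconstIoc (M y) y z hy hyz.le]
      refine setIntegral_mono_on (hconstIocInt (M y) y z hy)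
        ((hI y hy).mono_set Set.Ioc_subset_Ioi_self) measurableSet_Ioc ?_
      intro s hs
      have hs0 : 0 < s := hy.trans hs.1
      exact (div_le_div_iff_of_pos_right (pow_pos hs0 2)).mpr
        (hmono (Set.mem_Ici.mpr hy.le) (Set.mem_Ici.mpr hs0.le) hs.1.le)
    have h2 : y * z * (M y * (y⁻¹ - z⁻¹)) = M y * (z - y) := by
      field_simp
    calc M y * (z - y) = y * z * (M y * (y⁻¹ - z⁻¹)) := h2.symm
      _ ≤ y * z * ∫ s in Set.Ioc y z, M s / s ^ 2 :=
          mul_le_mul_of_nonneg_left h1 (by positivity)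
  -- splitting the integral
  have hsplit : ∀ x y : ℝ, 0 < x → x ≤ y →
      ∫ s in Set.Ioi x, M s / s ^ 2 =
        (∫ s in Set.Ioc x y, M s / s ^ 2) + ∫ s in Set.Ioi y, M s / s ^ 2 := by
    intro x y hx hxy
    have hy : 0 < y := lt_of_lt_of_le hx hxy
    rw [← Set.Ioc_union_Ioi_eq_Ioi hxy, setIntegral_union Set.Ioc_disjoint_Ioi_same
      measurableSet_Ioi ((hI x hx).mono_set Set.Ioc_subset_Ioi_self) (hI y hy)]
  constructor
  · -- Monotone
    intro x hx y hy hxy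
    rcases eq_or_lt_of_le hxy with rfl | hxy
    · exact le_refl _
    rcases eq_or_lt_of_le (Set.mem_Ici.mp hx) with hx0 | hx0
    · rw [etaTilde, etaTilde, ← hx0, zero_mul]
      have hy0 : 0 < y := by rw [← hx0] at hxy; exact hxy
      refine mul_nonneg hy0.le (setIntegral_nonneg measurableSet_Ioi fun s hs => ?_)
      exact div_nonneg (hnonneg s (hy0.trans hs).le) (sq_nonneg s)
    · rw [etaTilde, etaTilde, hsplit x y hx0 hxy.le]
      have hy0 : 0 < y := hx0.trans hxy
      have h1 := hC x y hx0 hxy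
      have h2 := hA y hy0
      have h3 : M y ≤ y * ∫ s in Set.Ioi y, M s / s ^ 2 := by
        rw [div_le_iff₀ hy0] at h2; linarith [h2]
      nlinarith [mul_le_mul_of_nonneg_left h3 (sub_nonneg.mpr hxy.le), h1, hy0, hx0]
  · -- Concave
    apply concaveOn_of_slope_anti_adjacent (convex_Ioi 0)
    intro x y z hx hz hxy hyz
    have hx0 : 0 < x := hx
    have hy0 : 0 < y := hx0.trans hxy
    have hz0 : 0 < z := hy0.trans hyz
    rw [div_le_div_iff₀ (by linarith) (by linarith)]
    rw [etaTilde, etaTilde, etaTilde, hsplit x y hx0 hxy.le, hsplit y z hy0 hyz.le]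
    set A := ∫ s in Set.Ioi z, M s / s ^ 2
    set B := ∫ s in Set.Ioc y z, M s / s ^ 2
    set C := ∫ s in Set.Ioc x y, M s / s ^ 2
    have h1 := hC x y hx0 hxy
    have h2 := hB y z hy0 hyz
    nlinarith [mul_le_mul_of_nonneg_right h1 (sub_nonneg.mpr hyz.le),
      mul_le_mul_of_nonneg_right h2 (sub_nonneg.mpr hxy.le), hy0, hx0, hz0]
end

section
/- Let M : [0,∞) → [0,∞) be nondecreasing with ∫₁^∞ M(s) s^{-2} ds < ∞, and let η̃(ρ) = ρ ∫_ρ^∞ M(s) s^{-2} ds for ρ > 0, η̃(0) = 0. Then η̃ is subadditive: η̃(ρ+λ) ≤ η̃(ρ) + η̃(λ) for all ρ, λ ≥ 0. -/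
open MeasureTheory

theorem stmt_10 (M : ℝ → ℝ) (hnonneg : ∀ s, 0 ≤ s → 0 ≤ M s)
    (hmono : MonotoneOn M (Set.Ici (0 : ℝ)))
    (hint : IntegrableOn (fun s => M s / s ^ 2) (Set.Ioi (1 : ℝ))) :
    ∀ ρ lam : ℝ, 0 ≤ ρ → 0 ≤ lam →
      etaTilde M (ρ + lam) ≤ etaTilde M ρ + etaTilde M lam := by
  set f : ℝ → ℝ := fun s => M s / s ^ 2 with hf
  have hInt : ∀ a : ℝ, 0 < a → IntegrableOn f (Set.Ioi a) := by
    intro a ha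
    rcases le_or_gt 1 a with h1a | ha1
    · exact hint.mono_set (Set.Ioi_subset_Ioi h1a)
    · rw [← Set.Ioc_union_Ioi_eq_Ioi ha1.le]
      refine IntegrableOn.union ?_ hint
      have hmeas : AEMeasurable M (volume.restrict (Set.Ioc a 1)) :=
        aemeasurable_restrict_of_monotoneOn measurableSet_Ioc
          (hmono.mono (fun x hx => le_of_lt (ha.trans hx.1)))
      have hmeasf : AEStronglyMeasurable f (volume.restrict (Set.Ioc a 1)) :=
        (hmeas.div ((measurable_id.pow_const 2).aemeasurable)).aestronglyMeasurable
      refine Integrable.mono' (g := fun _ => M 1 / a ^ 2)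
        (integrableOn_const measure_Ioc_lt_top.ne) hmeasf ?_
      filter_upwards [ae_restrict_mem measurableSet_Ioc] with s hs
      have h0 : 0 < s := ha.trans hs.1
      have hMs : 0 ≤ M s := hnonneg s h0.le
      have hM1 : M s ≤ M 1 := hmono h0.le (by norm_num) hs.2
      rw [Real.norm_eq_abs, abs_of_nonneg (div_nonneg hMs (sq_nonneg s))]
      exact div_le_div₀ (hMs.trans hM1) hM1 (by positivity)
        (pow_le_pow_left₀ ha.le hs.1.le 2)
  have hMonoI : ∀ a b : ℝ, 0 < a → a ≤ b →
      (∫ s in Set.Ioi b, f s) ≤ ∫ s in Set.Ioi a, f s := by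
    intro a b ha hab
    refine setIntegral_mono_set (hInt a ha) ?_
      ((Set.Ioi_subset_Ioi hab).eventuallyLE)
    filter_upwards [ae_restrict_mem measurableSet_Ioi] with s hs
    exact div_nonneg (hnonneg s (ha.trans hs).le) (sq_nonneg s)
  intro ρ lam hρ hlam
  rcases eq_or_lt_of_le hρ with rfl | hρ'
  · simp [etaTilde]
  rcases eq_or_lt_of_le hlam with rfl | hlam'
  · simp [etaTilde]
  have h1 := hMonoI ρ (ρ + lam) hρ' (by linarith)
  have h2 := hMonoI lam (ρ + lam) hlam' (by linarith)
  simp only [etaTilde]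
  nlinarith [mul_le_mul_of_nonneg_left h1 hρ'.le, mul_le_mul_of_nonneg_left h2 hlam'.le]
end

section
/- Let F be a normed space, let (M_p)_{p∈ℕ} be a sequence of positive real numbers, and let 0 < m₁ < m ≤ 1 and C > 0. For each n ∈ ℕ let x_n : ℕ^d → F satisfy sup_{α∈ℕ^d} m^{|α|} ‖x_n(α)‖ / M_{|α|} ≤ C. Assume that for every ε > 0 there exists N such that for all n, k ≥ N: sup_{α∈ℕ^d} ‖x_n(α) − x_k(α)‖ / (M_{|α|} · |α|!) ≤ ε. Then for every ε > 0 there exists N such that for all n, k ≥ N: sup_{α∈ℕ^d} m₁^{|α|} ‖x_n(α) − x_k(α)‖ / M_{|α|} ≤ ε. -/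
theorem stmt_12 {F : Type*} [NormedAddCommGroup F] (d : ℕ)
    (Mp : ℕ → ℝ) (hMp : ∀ p, 0 < Mp p)
    (m m1 C : ℝ) (hm1 : 0 < m1) (hm1m : m1 < m) (hm : m ≤ 1) (hC : 0 < C)
    (x : ℕ → (Fin d → ℕ) → F)
    (hb : ∀ (n : ℕ) (α : Fin d → ℕ), m ^ (∑ i, α i) * ‖x n α‖ / Mp (∑ i, α i) ≤ C)
    (hc : ∀ ε > (0 : ℝ), ∃ N : ℕ, ∀ n k : ℕ, N ≤ n → N ≤ k → ∀ α : Fin d → ℕ,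
      ‖x n α - x k α‖ / (Mp (∑ i, α i) * (Nat.factorial (∑ i, α i) : ℝ)) ≤ ε) :
    ∀ ε > (0 : ℝ), ∃ N : ℕ, ∀ n k : ℕ, N ≤ n → N ≤ k → ∀ α : Fin d → ℕ,
      m1 ^ (∑ i, α i) * ‖x n α - x k α‖ / Mp (∑ i, α i) ≤ ε := by
  intro ε hε
  have hm0 : 0 < m := hm1.trans hm1m
  have hr0 : 0 < m1 / m := div_pos hm1 hm0
  have hr1 : m1 / m < 1 := (div_lt_one hm0).2 hm1m
  obtain ⟨p0, hp0⟩ : ∃ p0 : ℕ, (m1 / m) ^ p0 < ε / (2 * C) :=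
    exists_pow_lt_of_lt_one (by positivity) hr1
  set δ : ℝ := ε / (Nat.factorial p0 : ℝ) with hδ
  have hδpos : 0 < δ := by positivity
  obtain ⟨N, hN⟩ := hc δ hδpos
  refine ⟨N, fun n k hn hk α => ?_⟩
  set p : ℕ := ∑ i, α i with hp
  have hMpp : 0 < Mp p := hMp p
  have hMne : Mp p ≠ 0 := hMpp.ne'
  have hm1le1 : m1 ≤ 1 := (hm1m.trans_le hm).le
  set A : ℝ := ‖x n α - x k α‖ with hA
  have hA0 : 0 ≤ A := norm_nonneg _
  rcases le_or_gt p0 p with hle | hlt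
  · -- large order: use the uniform bound
    have hΔ : A ≤ ‖x n α‖ + ‖x k α‖ := norm_sub_le _ _
    have hmp : (0:ℝ) < m ^ p := pow_pos hm0 p
    have h2 : m ^ p * A / Mp p ≤ 2 * C := by
      have h3 := hb n α
      have h4 := hb k α
      rw [← hp] at h3 h4
      calc m ^ p * A / Mp p ≤ (m ^ p * ‖x n α‖ + m ^ p * ‖x k α‖) / Mp p := by
            gcongr
            nlinarith [norm_nonneg (x n α), norm_nonneg (x k α)]
        _ = m ^ p * ‖x n α‖ / Mp p + m ^ p * ‖x k α‖ / Mp p := by ring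
        _ ≤ C + C := add_le_add h3 h4
        _ = 2 * C := by ring
    have heq : m1 ^ p * A / Mp p = (m1 / m) ^ p * (m ^ p * A / Mp p) := by
      field_simp
      rw [div_pow, mul_assoc, div_mul_cancel₀ _ (pow_ne_zero _ hm0.ne'), mul_comm]
    have hpow : (m1 / m) ^ p ≤ (m1 / m) ^ p0 :=
      pow_le_pow_of_le_one hr0.le hr1.le hle
    calc m1 ^ p * A / Mp p = (m1 / m) ^ p * (m ^ p * A / Mp p) := heq
      _ ≤ (m1 / m) ^ p0 * (2 * C) := by
          apply mul_le_mul hpow h2 (by positivity) (by positivity)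
      _ ≤ (ε / (2 * C)) * (2 * C) := by
          apply mul_le_mul_of_nonneg_right hp0.le (by positivity)
      _ = ε := by field_simp
  · -- small order: use the Cauchy hypothesis
    have h := hN n k hn hk α
    rw [← hp, ← hA] at h
    have hfacne : ((Nat.factorial p : ℝ)) ≠ 0 := Nat.cast_ne_zero.2 (Nat.factorial_ne_zero p)
    have hfacle : (Nat.factorial p : ℝ) ≤ (Nat.factorial p0 : ℝ) :=
      Nat.cast_le.2 (Nat.factorial_le hlt.le)
    have hm1p : m1 ^ p ≤ 1 := pow_le_one₀ hm1.le hm1le1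
    have hbd : m1 ^ p * (Nat.factorial p : ℝ) ≤ (Nat.factorial p0 : ℝ) := by
      calc m1 ^ p * (Nat.factorial p : ℝ) ≤ 1 * (Nat.factorial p0 : ℝ) := by
            apply mul_le_mul hm1p hfacle (by positivity) one_pos.le
        _ = (Nat.factorial p0 : ℝ) := one_mul _
    calc m1 ^ p * A / Mp p
        = (A / (Mp p * (Nat.factorial p : ℝ))) * (m1 ^ p * (Nat.factorial p : ℝ)) := by
          field_simp
      _ ≤ δ * (Nat.factorial p0 : ℝ) := by
          apply mul_le_mul h hbd (by positivity) hδpos.le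
      _ = ε := by
          rw [hδ]
          field_simp
end
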